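/- arXiv:1503.03852 — 3 statements merged into one kernel-verified Lean document; each statement's English description precedes it below -/
import Mathlib

section
/- Let Γ be a finitely generated irreducible subgroup of Diff₊(I), with a fixed finite symmetric generating set, such that every non-identity element of Γ has finitely many fixed points in (0,1). Let f be the biggest generator of Γ (i.e., ξ ≤ f in the biorder for every generator ξ), assume f has at least one fixed point in (0,1), let z = min Fix(f), and let ω ∈ Γ_f with ω(z) > z. Then there exists ε > 0 such that for all a, b with 0 < a < b < ε and every integer p ≥ 4 with f^p(a) < b, one has f^{p−4}(ω f^{−n} ω^{−1}(a)) < ω f^{−n} ω^{−1}(b) for all sufficiently large n. -/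
noncomputable section

/-- The unit interval `[0,1] ⊆ ℝ`. -/
abbrev unitI : Set ℝ := Set.Icc (0:ℝ) 1

/-- Ambient group: bijections of the unit interval. -/
abbrev IntervalMap : Type := Equiv.Perm ↥unitI

/-- The extension of `σ` to `ℝ`, by the identity outside `[0,1]`. -/
def toReal (σ : IntervalMap) : ℝ → ℝ :=
  fun x => if h : x ∈ unitI then (σ ⟨x, h⟩ : ℝ) else x

/-- `σ` is an orientation-preserving homeomorphism of `[0,1]` (a strictly
increasing bijection of `[0,1]`; such a map automatically fixes `0` and `1`
and is continuous). -/
def IsOPH (σ : IntervalMap) : Prop := StrictMono fun x : ↥unitI => (σ x : ℝ)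

/-- `σ` extends to a `C¹` function on `[0,1]`. -/
def IsC1On (σ : IntervalMap) : Prop := ContDiffOn ℝ 1 (toReal σ) unitI

/-- `σ` is an orientation-preserving `C¹` diffeomorphism of `[0,1]`. -/
def IsOPD (σ : IntervalMap) : Prop := IsOPH σ ∧ IsC1On σ ∧ IsC1On σ⁻¹

/-- `Γ` is a subgroup of `Diff₊(I)`. -/
def DiffSubgroup (Γ : Subgroup IntervalMap) : Prop := ∀ γ ∈ Γ, IsOPD γ

/-- `Γ` is a subgroup of `Homeo₊(I)`. -/
def HomeoSubgroup (Γ : Subgroup IntervalMap) : Prop := ∀ γ ∈ Γ, IsOPH γ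

/-- The set of fixed points of `σ` in the open interval `(0,1)`. -/
def FixPts (σ : IntervalMap) : Set ↥unitI :=
  {x : ↥unitI | σ x = x ∧ 0 < (x : ℝ) ∧ (x : ℝ) < 1}

/-- Every non-identity element of `Γ` has finitely many fixed points in `(0,1)`. -/
def FinFix (Γ : Subgroup IntervalMap) : Prop := ∀ γ ∈ Γ, γ ≠ 1 → (FixPts γ).Finite

/-- The `C⁰`-norm `‖σ‖ = sup_{x ∈ [0,1]} |σ(x) - x|`. -/
def C0norm (σ : IntervalMap) : ℝ := ⨆ x : ↥unitI, |(σ x : ℝ) - (x : ℝ)|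

/-- `Γ` is locally transitive. -/
def LocTrans (Γ : Subgroup IntervalMap) : Prop :=
  ∀ p : ↥unitI, 0 < (p : ℝ) → (p : ℝ) < 1 → ∀ ε : ℝ, 0 < ε →
    ∃ γ ∈ Γ, C0norm γ < ε ∧ γ p ≠ p

/-- `Γ` is irreducible: no global fixed point in `(0,1)`. -/
def Irred (Γ : Subgroup IntervalMap) : Prop :=
  ¬ ∃ p : ↥unitI, 0 < (p : ℝ) ∧ (p : ℝ) < 1 ∧ ∀ γ ∈ Γ, γ p = p

/-- The group `Aff₊(ℝ)` of orientation-preserving affine maps `x ↦ a x + b`,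
`a > 0`, as a subgroup of the permutation group of `ℝ`. -/
def AffPlus : Subgroup (Equiv.Perm ℝ) where
  carrier := {e | ∃ a b : ℝ, 0 < a ∧ ∀ x, e x = a * x + b}
  one_mem' := ⟨1, 0, one_pos, fun x => by simp⟩
  mul_mem' := by
    rintro e f ⟨a, b, ha, he⟩ ⟨c, d, hc, hf⟩
    refine ⟨a * c, a * d + b, mul_pos ha hc, fun x => ?_⟩
    rw [Equiv.Perm.mul_apply, hf, he]; ring
  inv_mem' := by
    rintro e ⟨a, b, ha, he⟩
    refine ⟨a⁻¹, -b / a, by positivity, fun y => ?_⟩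
    apply e.injective
    rw [show e (e⁻¹ y) = y from e.apply_symm_apply y, he]
    field_simp
    ring

/-- `G` embeds into (i.e. is isomorphic to a subgroup of) `Aff₊(ℝ)`. -/
def EmbedsInAff (G : Type*) [Group G] : Prop :=
  ∃ φ : G →* ↥AffPlus, Function.Injective φ

/-- `G` embeds into `Aff₊(ℝ)ⁿ` for some `n ≥ 1`. -/
def EmbedsInAffPow (G : Type*) [Group G] : Prop :=
  ∃ n : ℕ, 1 ≤ n ∧ ∃ φ : G →* (Fin n → ↥AffPlus), Function.Injective φ

/-- `G` has infinite girth: for every `m` there is a finite generating set `S`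
such that no non-trivial reduced word of length at most `m` in `S ∪ S⁻¹`
represents the identity. -/
def HasInfiniteGirth (G : Type*) [Group G] : Prop :=
  ∀ m : ℕ, ∃ S : Finset G, Subgroup.closure (S : Set G) = ⊤ ∧
    ∀ w : FreeGroup {x // x ∈ S}, w ≠ 1 →
      (∃ l : List ({x // x ∈ S} × Bool), l.length ≤ m ∧ FreeGroup.mk l = w) →
      FreeGroup.lift (fun s => (s : G)) w ≠ 1

/-- `a` and `b` generate a free semigroup on two generators: distinct
non-empty positive words in `a, b` give distinct elements. -/
def FreeSemigroupPair {G : Type*} [Group G] (a b : G) : Prop :=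
  Function.Injective
    ⇑(FreeSemigroup.lift (fun x : Bool => if x then a else b) : FreeSemigroup Bool →ₙ* G)

/-- `g < f` in the biorder: `g(x) < f(x)` near `0`. -/
def ltNear (g f : IntervalMap) : Prop :=
  ∃ δ : ℝ, 0 < δ ∧ ∀ x : ↥unitI, 0 < (x : ℝ) → (x : ℝ) < δ → (g x : ℝ) < (f x : ℝ)

/-- `g ≤ f` in the biorder. -/
def leNear (g f : IntervalMap) : Prop := ltNear g f ∨ g = f

/-- `g << f`: `g` is infinitesimal with respect to `f`, i.e. `gⁿ < f` for all `n ∈ ℤ`. -/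
def Infinitesimal (g f : IntervalMap) : Prop := ∀ n : ℤ, ltNear (g ^ n) f

/-- `(f, g)` is a crossed pair on the interval `(a,b)`: `f` fixes `a` and `b`
but no point strictly between them, while `g` maps `a` or `b` into `(a,b)`. -/
def CrossedOn (f g : IntervalMap) (a b : ↥unitI) : Prop :=
  f a = a ∧ f b = b ∧ (∀ x : ↥unitI, (a : ℝ) < x → (x : ℝ) < b → f x ≠ x) ∧
  (((a : ℝ) < (g a : ℝ) ∧ (g a : ℝ) < b) ∨ ((a : ℝ) < (g b : ℝ) ∧ (g b : ℝ) < b))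

/-- `(f, g)` is a crossed pair. -/
def CrossedPair (f g : IntervalMap) : Prop :=
  ∃ a b : ↥unitI, (a : ℝ) < b ∧ (CrossedOn f g a b ∨ CrossedOn g f a b)

/-- The auxiliary point configuration used in weak transitivity:
`extPt γ p 0 = 0`, `extPt γ p j = γ(pⱼ)` for `1 ≤ j ≤ k` (here `pⱼ = p ⟨j-1⟩`
in `0`-indexed notation), and `extPt γ p (k+1) = 1`. -/
def extPt (γ : IntervalMap) {k : ℕ} (p : Fin k → ↥unitI) (j : ℕ) : ℝ :=
  if j = 0 then 0 else if h : j - 1 < k then (γ (p ⟨j - 1, h⟩) : ℝ) else 1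

/-- `Γ` is weakly `k`-transitive. -/
def WeaklyKTrans (Γ : Subgroup IntervalMap) (k : ℕ) : Prop :=
  ∀ g ∈ Γ, ∀ p : Fin k → ↥unitI,
    (∀ i, 0 < (p i : ℝ) ∧ (p i : ℝ) < 1) →
    (StrictMono fun i => (p i : ℝ)) →
    ∀ ε : ℝ, 0 < ε →
      ∃ γ ∈ Γ, extPt γ p k < ε ∧
        ∀ i : Fin k,
          extPt γ p i.val < (g (γ (p i)) : ℝ) ∧
            (g (γ (p i)) : ℝ) < extPt γ p (i.val + 2)

/-- `Γ` is weakly transitive. -/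
def WeakTrans (Γ : Subgroup IntervalMap) : Prop := ∀ k : ℕ, 1 ≤ k → WeaklyKTrans Γ k


theorem Equiv.Perm.apply_inv_self {α : Type*} (f : Equiv.Perm α) (x : α) : f (f⁻¹ x) = x :=
  f.apply_symm_apply x

theorem Equiv.Perm.inv_apply_self {α : Type*} (f : Equiv.Perm α) (x : α) : f⁻¹ (f x) = x :=
  f.symm_apply_apply x

namespace Stmt10Aux

lemma sm_of_oph {σ : IntervalMap} (h : IsOPH σ) : StrictMono σ :=
  fun x y hxy => Subtype.coe_lt_coe.mp (h hxy)

lemma sm_inv {σ : IntervalMap} (h : StrictMono σ) : StrictMono ⇑(σ⁻¹) := by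
  intro x y hxy
  rcases lt_trichotomy (σ⁻¹ x) (σ⁻¹ y) with h1 | h1 | h1
  · exact h1
  · exfalso
    exact hxy.ne (by
      rw [← Equiv.Perm.apply_inv_self σ x, ← Equiv.Perm.apply_inv_self σ y, h1])
  · have h2 := h h1
    rw [Equiv.Perm.apply_inv_self, Equiv.Perm.apply_inv_self] at h2
    exact absurd h2 hxy.asymm

def z0 : ↥unitI := ⟨0, by constructor <;> norm_num⟩

lemma z0_le (x : ↥unitI) : z0 ≤ x := Subtype.coe_le_coe.mp x.2.1

lemma fix_z0 {σ : IntervalMap} (h : StrictMono σ) : σ z0 = z0 := by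
  rcases (z0_le (σ⁻¹ z0)).lt_or_eq with h1 | h1
  · have h2 := h h1
    rw [Equiv.Perm.apply_inv_self] at h2
    exact absurd h2 (not_lt.mpr (z0_le _))
  · rw [h1, Equiv.Perm.apply_inv_self]
    exact h1

lemma pos_apply {σ : IntervalMap} (h : StrictMono σ) {x : ↥unitI}
    (hx : 0 < (x : ℝ)) : 0 < (σ x : ℝ) := by
  have h1 : z0 < x := Subtype.coe_lt_coe.mp hx
  have h2 := h h1
  rw [fix_z0 h] at h2
  exact Subtype.coe_lt_coe.mpr h2

lemma sm_pow {σ : IntervalMap} (h : StrictMono σ) (n : ℕ) :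
    StrictMono ⇑(σ ^ n) := by
  induction n with
  | zero => simpa using strictMono_id
  | succ n ih =>
      intro x y hxy
      rw [pow_succ]
      exact ih (h hxy)

end Stmt10Aux

open Stmt10Aux in
theorem stmt10 (Γ : Subgroup IntervalMap) (hΓdiff : DiffSubgroup Γ)
    (hΓfix : FinFix Γ) (hΓirr : Irred Γ)
    (S : Finset IntervalMap) (hSsub : (S : Set IntervalMap) ⊆ Γ)
    (hSsym : ∀ s ∈ S, s⁻¹ ∈ S)
    (hSgen : Subgroup.closure (S : Set IntervalMap) = Γ)
    (f : IntervalMap) (hfS : f ∈ S) (hfbig : ∀ ξ ∈ S, leNear ξ f)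
    (z : ↥unitI) (hz : z ∈ FixPts f) (hzmin : ∀ y ∈ FixPts f, z ≤ y)
    (ω : IntervalMap) (hω : ω ∈ Γ) (hωinf : Infinitesimal ω f)
    (hωz : (z : ℝ) < (ω z : ℝ)) :
    ∃ ε : ℝ, 0 < ε ∧ ∀ a b : ↥unitI, 0 < (a : ℝ) → (a : ℝ) < (b : ℝ) →
      (b : ℝ) < ε → ∀ p : ℕ, 4 ≤ p → ((f ^ p) a : ℝ) < (b : ℝ) →
        ∃ N : ℕ, ∀ n : ℕ, N ≤ n →
          ((f ^ (p - 4)) ((ω * (f ^ n)⁻¹ * ω⁻¹) a) : ℝ) <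
            ((ω * (f ^ n)⁻¹ * ω⁻¹) b : ℝ) := by

  classical
  have hfGam : f ∈ Γ := hSsub hfS
  have hfm : StrictMono f := sm_of_oph (hΓdiff f hfGam).1
  have hωm : StrictMono ω := sm_of_oph (hΓdiff ω hω).1
  have hfmi : StrictMono (f⁻¹ : IntervalMap) := sm_inv hfm
  have hωmi : StrictMono (ω⁻¹ : IntervalMap) := sm_inv hωm
  obtain ⟨δ0, hδ0, h0⟩ := hωinf 0
  obtain ⟨δ1, hδ1, h1⟩ := hωinf 1
  obtain ⟨δ2, hδ2, h2⟩ := hωinf (-1)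
  simp only [zpow_zero, zpow_one, zpow_neg_one, Equiv.Perm.coe_one, id_eq] at h0 h1 h2
  obtain ⟨hzfix, hz0, hz1⟩ := hz
  have hfC : ContinuousOn (toReal f) unitI := (hΓdiff f hfGam).2.1.continuousOn
  have hfval : ∀ x : ↥unitI, toReal f (x : ℝ) = (f x : ℝ) := by
    intro x
    simp [toReal, x.2]
  -- every point of (0, z) is moved to the right by f
  have keyA : ∀ x : ↥unitI, 0 < (x : ℝ) → (x : ℝ) < (z : ℝ) → (x : ℝ) < (f x : ℝ) := by
    intro x hx0 hxz
    by_contra hcon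
    push_neg at hcon
    have hne : (f x : ℝ) ≠ (x : ℝ) := by
      intro he
      have hfix : x ∈ FixPts f := ⟨Subtype.ext he, hx0, hxz.trans hz1⟩
      exact absurd (Subtype.coe_le_coe.mpr (hzmin x hfix)) (not_le.mpr hxz)
    have hlt : (f x : ℝ) < (x : ℝ) := hcon.lt_of_ne hne
    set w : ℝ := min δ0 (x : ℝ) / 2 with hw
    have hw0 : 0 < w := by
      have := lt_min hδ0 hx0
      positivity
    have hwx : w < (x : ℝ) := by
      have := min_le_right δ0 (x : ℝ)
      have := lt_min hδ0 hx0
      simp only [hw]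
      linarith
    have hwδ : w < δ0 := by
      have := min_le_left δ0 (x : ℝ)
      have := lt_min hδ0 hx0
      simp only [hw]
      linarith
    have hwI : w ∈ unitI := ⟨hw0.le, (hwx.trans_le x.2.2).le⟩
    have hsub : Set.Icc w (x : ℝ) ⊆ unitI := Set.Icc_subset_Icc hw0.le x.2.2
    have hgc : ContinuousOn (fun t => toReal f t - t) (Set.Icc w (x : ℝ)) :=
      (hfC.mono hsub).sub continuousOn_id
    have hgw : 0 < toReal f w - w := by
      have hh := h0 ⟨w, hwI⟩ hw0 hwδ
      have := hfval ⟨w, hwI⟩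
      simp only [this]
      linarith
    have hgx : toReal f (x : ℝ) - (x : ℝ) < 0 := by
      rw [hfval]
      linarith
    have hmem : (0 : ℝ) ∈ Set.Icc (toReal f (x : ℝ) - (x : ℝ)) (toReal f w - w) :=
      ⟨hgx.le, hgw.le⟩
    obtain ⟨c, hc, hc0⟩ := intermediate_value_Icc' hwx.le hgc hmem
    have hcI : c ∈ unitI := hsub hc
    have hcfix : (⟨c, hcI⟩ : ↥unitI) ∈ FixPts f := by
      refine ⟨Subtype.ext ?_, lt_of_lt_of_le hw0 hc.1, lt_of_le_of_lt hc.2 (hxz.trans hz1)⟩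
      have : toReal f c = c := by linarith [sub_eq_zero.mp hc0]
      rw [← hfval ⟨c, hcI⟩]
      exact this
    have := Subtype.coe_le_coe.mpr (hzmin _ hcfix)
    simp only at this
    have : (z : ℝ) ≤ c := this
    have hcx : c ≤ (x : ℝ) := hc.2
    linarith
  -- f⁻¹ moves points of (0,z) to the left, staying in (0,z)
  have keyB : ∀ y : ↥unitI, 0 < (y : ℝ) → (y : ℝ) < (z : ℝ) →
      0 < ((f⁻¹ : IntervalMap) y : ℝ) ∧ ((f⁻¹ : IntervalMap) y : ℝ) < (y : ℝ) ∧
        ((f⁻¹ : IntervalMap) y : ℝ) < (z : ℝ) := by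
    intro y hy0 hyz
    have hp : 0 < ((f⁻¹ : IntervalMap) y : ℝ) := pos_apply hfmi hy0
    have hyz' : y < f z := by
      rw [hzfix]
      exact Subtype.coe_lt_coe.mp hyz
    have hzlt : (f⁻¹ : IntervalMap) y < z := by
      have := hfmi hyz'
      rwa [Equiv.Perm.inv_apply_self] at this
    have hzlt' : ((f⁻¹ : IntervalMap) y : ℝ) < (z : ℝ) := Subtype.coe_lt_coe.mpr hzlt
    have hmv := keyA ((f⁻¹ : IntervalMap) y) hp hzlt'
    rw [Equiv.Perm.apply_inv_self] at hmv
    exact ⟨hp, hmv, hzlt'⟩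
  refine ⟨min δ1 (min δ2 (z : ℝ)), lt_min hδ1 (lt_min hδ2 hz0), ?_⟩
  intro a b ha hab hb p hp hfp
  obtain ⟨q, rfl⟩ : ∃ q, p = q + 4 := ⟨p - 4, by omega⟩
  simp only [Nat.add_sub_cancel]
  have hb0 : 0 < (b : ℝ) := ha.trans hab
  have hbδ1 : (b : ℝ) < δ1 := hb.trans_le (min_le_left _ _)
  have hbδ2 : (b : ℝ) < δ2 := hb.trans_le ((min_le_right _ _).trans (min_le_left _ _))
  have hbz : (b : ℝ) < (z : ℝ) := hb.trans_le ((min_le_right _ _).trans (min_le_right _ _))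
  have haδ2 : (a : ℝ) < δ2 := hab.trans hbδ2
  set A : ↥unitI := ω⁻¹ a with hAdef
  set B : ↥unitI := ω⁻¹ b with hBdef
  have hA0 : 0 < (A : ℝ) := pos_apply hωmi ha
  have hAB : A < B := hωmi (Subtype.coe_lt_coe.mp hab)
  have hB0 : 0 < (B : ℝ) := pos_apply hωmi hb0
  have hBz : (B : ℝ) < (z : ℝ) := by
    have hiz : ω⁻¹ z < z := by
      have := hωmi (Subtype.coe_lt_coe.mp hωz)
      rwa [Equiv.Perm.inv_apply_self] at this
    have : B < ω⁻¹ z := hωmi (Subtype.coe_lt_coe.mp hbz)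
    exact Subtype.coe_lt_coe.mpr (this.trans hiz)
  -- the key static inequality : f^(q+2) A < B
  have sA : A < f a := Subtype.coe_lt_coe.mp (h2 a ha haδ2)
  have sK1 : (f ^ (q + 2)) A < (f ^ (q + 2)) (f a) := sm_pow hfm (q + 2) sA
  have eK1 : (f ^ (q + 2)) (f a) = (f ^ (q + 3)) a := by
    have h := congrArg (fun π : IntervalMap => π a) (pow_succ f (q + 2))
    simp only [Equiv.Perm.mul_apply] at h
    exact h.symm
  have sK2 : (f ^ (q + 3)) a < (f⁻¹ : IntervalMap) b := by
    have hfb : (f ^ (q + 4)) a < b := Subtype.coe_lt_coe.mp hfp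
    have hmono := hfmi hfb
    rw [show q + 4 = (q + 3) + 1 from rfl, pow_succ', Equiv.Perm.mul_apply,
      Equiv.Perm.inv_apply_self] at hmono
    exact hmono
  have hub := keyB b hb0 hbz
  have sK3 : (f⁻¹ : IntervalMap) b < B := by
    have h1' := h1 ((f⁻¹ : IntervalMap) b) hub.1 (hub.2.1.trans hbδ1)
    rw [Equiv.Perm.apply_inv_self] at h1'
    have h1'' : ω ((f⁻¹ : IntervalMap) b) < b := Subtype.coe_lt_coe.mp h1'
    have := hωmi h1''
    rwa [Equiv.Perm.inv_apply_self] at this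
  have K : (f ^ (q + 2)) A < B := ((sK1.trans_eq eK1).trans sK2).trans sK3
  -- the sequence Y n = f^{-n} B
  set Y : ℕ → ↥unitI := fun n => ((f ^ n)⁻¹ : IntervalMap) B with hYdef
  have hY0 : Y 0 = B := by simp [hYdef]; rfl
  have hYsucc : ∀ n, Y (n + 1) = (f⁻¹ : IntervalMap) (Y n) := by
    intro n
    have hip : ((f ^ (n + 1))⁻¹ : IntervalMap) = f⁻¹ * (f ^ n)⁻¹ := by
      rw [pow_succ, mul_inv_rev]
    simp only [hYdef, hip, Equiv.Perm.mul_apply]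
  have hYbound : ∀ n, 0 < (Y n : ℝ) ∧ (Y n : ℝ) < (z : ℝ) := by
    intro n
    induction n with
    | zero => rw [hY0]; exact ⟨hB0, hBz⟩
    | succ n ih =>
        rw [hYsucc]
        obtain ⟨hh1, hh2, hh3⟩ := keyB (Y n) ih.1 ih.2
        exact ⟨hh1, hh3⟩
  have hYdec : ∀ n, (Y (n + 1) : ℝ) < (Y n : ℝ) := by
    intro n
    rw [hYsucc]
    exact (keyB (Y n) (hYbound n).1 (hYbound n).2).2.1
  set u : ℕ → ℝ := fun n => (Y n : ℝ) with hudef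
  have hanti : Antitone u := antitone_nat_of_succ_le fun n => (hYdec n).le
  have hbdd : BddBelow (Set.range u) := ⟨0, by rintro r ⟨n, rfl⟩; exact (hYbound n).1.le⟩
  have htend : Filter.Tendsto u Filter.atTop (nhds (⨅ n, u n)) :=
    tendsto_atTop_ciInf hanti hbdd
  set L := ⨅ n, u n with hLdef
  have hL0 : 0 ≤ L := le_ciInf fun n => (hYbound n).1.le
  have hLz : L < (z : ℝ) := lt_of_le_of_lt (ciInf_le hbdd 0) (hYbound 0).2
  have hLeq0 : L = 0 := by
    by_contra hne
    have hLpos : 0 < L := hL0.lt_of_ne (Ne.symm hne)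
    have hLI : L ∈ unitI := ⟨hL0, (hLz.trans hz1).le⟩
    have hcw : ContinuousWithinAt (toReal f) unitI L := hfC L hLI
    have htend' : Filter.Tendsto u Filter.atTop (nhdsWithin L unitI) :=
      tendsto_nhdsWithin_iff.mpr ⟨htend, Filter.Eventually.of_forall fun n => (Y n).2⟩
    have hcomp : Filter.Tendsto (fun n => toReal f (u n)) Filter.atTop
        (nhds (toReal f L)) := hcw.tendsto.comp htend'
    have heq : ∀ n, toReal f (u (n + 1)) = u n := by
      intro n
      show toReal f ((Y (n + 1) : ℝ)) = (Y n : ℝ)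
      rw [hfval (Y (n + 1)), hYsucc n, Equiv.Perm.apply_inv_self]
    have hcomp' : Filter.Tendsto (fun n => toReal f (u (n + 1))) Filter.atTop
        (nhds (toReal f L)) := hcomp.comp (Filter.tendsto_add_atTop_nat 1)
    have hcomp'' : Filter.Tendsto u Filter.atTop (nhds (toReal f L)) := by
      have : (fun n => toReal f (u (n + 1))) = u := funext heq
      rwa [this] at hcomp'
    have hfL : toReal f L = L := tendsto_nhds_unique hcomp'' htend
    have hfixL : (⟨L, hLI⟩ : ↥unitI) ∈ FixPts f := by
      refine ⟨Subtype.ext ?_, hLpos, hLz.trans hz1⟩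
      rw [← hfval ⟨L, hLI⟩]
      exact hfL
    have := Subtype.coe_le_coe.mpr (hzmin _ hfixL)
    simp only at this
    have : (z : ℝ) ≤ L := this
    linarith
  rw [hLeq0] at htend
  have hev : ∀ᶠ n in Filter.atTop, u n < min δ1 δ2 :=
    htend.eventually (eventually_lt_nhds (lt_min hδ1 hδ2))
  obtain ⟨N, hN⟩ := Filter.eventually_atTop.mp hev
  refine ⟨N, ?_⟩
  intro n hn
  have hYδ1 : (Y n : ℝ) < δ1 := (hN n hn).trans_le (min_le_left _ _)
  have hYδ2 : (Y n : ℝ) < δ2 := (hN n hn).trans_le (min_le_right _ _)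
  have hsmn : StrictMono ((f ^ n)⁻¹ : IntervalMap) := sm_inv (sm_pow hfm n)
  set X : ↥unitI := ((f ^ n)⁻¹ : IntervalMap) A with hXdef
  have hXY : X < Y n := hsmn hAB
  have hX0 : 0 < (X : ℝ) := pos_apply hsmn hA0
  have hXδ1 : (X : ℝ) < δ1 := (Subtype.coe_lt_coe.mpr hXY).trans hYδ1
  -- step 1 : ω X < f X
  have s1 : ω X < f X := Subtype.coe_lt_coe.mp (h1 X hX0 hXδ1)
  -- step 3 : f^(q+2) X < Y n
  have hcomm : (f ^ (q + 2)) * ((f ^ n)⁻¹ : IntervalMap) = (f ^ n)⁻¹ * f ^ (q + 2) :=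
    (((Commute.refl f).pow_pow (q + 2) n).inv_right).eq
  have e3 : (f ^ (q + 2)) X = ((f ^ n)⁻¹ : IntervalMap) ((f ^ (q + 2)) A) := by
    have hca := congrArg (fun π : IntervalMap => π A) hcomm
    simpa only [Equiv.Perm.mul_apply, hXdef] using hca
  have s3 : (f ^ (q + 2)) X < Y n := by
    rw [e3, hYdef]
    exact hsmn K
  -- step 4 : f^(q+1) X < f⁻¹ (Y n)
  have s4 : (f ^ (q + 1)) X < (f⁻¹ : IntervalMap) (Y n) := by
    have hmono := hfmi s3
    rwa [show q + 2 = (q + 1) + 1 from rfl, pow_succ', Equiv.Perm.mul_apply,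
      Equiv.Perm.inv_apply_self] at hmono
  -- step 2 : f⁻¹ (Y n) < ω (Y n)
  have hun := keyB (Y n) (hYbound n).1 (hYbound n).2
  have s2 : (f⁻¹ : IntervalMap) (Y n) < ω (Y n) := by
    have h2' := h2 ((f⁻¹ : IntervalMap) (Y n)) hun.1 (hun.2.1.trans hYδ2)
    rw [Equiv.Perm.apply_inv_self] at h2'
    have h2'' : ω⁻¹ ((f⁻¹ : IntervalMap) (Y n)) < Y n := Subtype.coe_lt_coe.mp h2'
    have := hωm h2''
    rwa [Equiv.Perm.apply_inv_self] at this
  -- step 5 and conclusion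
  have s5 : (f ^ q) (ω X) < (f ^ q) (f X) := sm_pow hfm q s1
  have e5 : (f ^ q) (f X) = (f ^ (q + 1)) X := by
    rw [pow_succ, Equiv.Perm.mul_apply]
  have final : (f ^ q) (ω X) < ω (Y n) := (((s5.trans_eq e5).trans s4).trans s2)
  have egoala : (ω * (f ^ n)⁻¹ * ω⁻¹) a = ω X := by
    simp only [Equiv.Perm.mul_apply, hXdef, hAdef]
  have egoalb : (ω * (f ^ n)⁻¹ * ω⁻¹) b = ω (Y n) := by
    simp only [Equiv.Perm.mul_apply, hYdef, hBdef]
  rw [egoala, egoalb]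
  exact Subtype.coe_lt_coe.mpr final


end
end

section
/- If a subgroup Γ ≤ Diff₊(I) is locally transitive, then Γ is dynamically 1-transitive: for every p ∈ (0,1) and every non-empty open interval J ⊆ (0,1) there exists γ ∈ Γ with γ(p) ∈ J. -/
noncomputable section

lemma unitI_nonempty' : Nonempty ↥unitI := ⟨⟨0, le_refl 0, by norm_num⟩⟩

lemma bddAboveAux (γ : IntervalMap) :
    BddAbove (Set.range fun x : ↥unitI => |(γ x : ℝ) - (x : ℝ)|) := by
  refine ⟨1, ?_⟩
  rintro _ ⟨x, rfl⟩
  have h1 := (γ x).2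
  have h2 := x.2
  rw [abs_sub_le_iff]
  constructor <;> · simp only [Set.mem_Icc] at h1 h2; linarith [h1.1, h1.2, h2.1, h2.2]

lemma le_C0norm (γ : IntervalMap) (x : ↥unitI) :
    |(γ x : ℝ) - (x : ℝ)| ≤ C0norm γ :=
  le_ciSup (bddAboveAux γ) x

lemma C0norm_inv_le (γ : IntervalMap) : C0norm γ⁻¹ ≤ C0norm γ := by
  haveI := unitI_nonempty'
  refine ciSup_le fun x => ?_
  have h := le_C0norm γ (γ⁻¹ x)
  rw [show γ (γ⁻¹ x) = x from γ.apply_symm_apply x] at h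
  rwa [abs_sub_comm] at h

theorem stmt12 (Γ : Subgroup IntervalMap) (hΓdiff : DiffSubgroup Γ)
    (hΓloc : LocTrans Γ) :
    ∀ p : ↥unitI, 0 < (p : ℝ) → (p : ℝ) < 1 →
      ∀ c d : ℝ, 0 ≤ c → c < d → d ≤ 1 →
        ∃ γ ∈ Γ, c < (γ p : ℝ) ∧ (γ p : ℝ) < d := by
  intro p hp0 hp1 c d hc hcd hd1
  rcases le_or_gt (p : ℝ) c with h1 | h1
  · -- p ≤ c : sup case
    set S : Set ℝ := {x | x ≤ c ∧ ∃ γ ∈ Γ, ((γ p : ↥unitI) : ℝ) = x} with hS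
    have hpS : (p : ℝ) ∈ S := ⟨h1, 1, Γ.one_mem, rfl⟩
    have hSne : S.Nonempty := ⟨p, hpS⟩
    have hSbdd : BddAbove S := ⟨c, fun x hx => hx.1⟩
    set s : ℝ := sSup S with hsdef
    have hps : (p : ℝ) ≤ s := le_csSup hSbdd hpS
    have hsc : s ≤ c := csSup_le hSne fun x hx => hx.1
    have hs0 : 0 < s := lt_of_lt_of_le hp0 hps
    have hs1 : s < 1 := lt_of_le_of_lt hsc (lt_of_lt_of_le hcd hd1)
    have sU : s ∈ unitI := ⟨hs0.le, hs1.le⟩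
    obtain ⟨γ, hγΓ, hγn, hγs⟩ := hΓloc ⟨s, sU⟩ hs0 hs1 (d - c) (by linarith)
    -- produce τ ∈ Γ with C0norm τ < d - c and s < τ s
    have hmono : StrictMono fun x : ↥unitI => (γ x : ℝ) := (hΓdiff γ hγΓ).1
    have hne : ((γ ⟨s, sU⟩ : ↥unitI) : ℝ) ≠ s := fun h => hγs (Subtype.ext h)
    obtain ⟨τ, hτΓ, hτn, hτs⟩ :
        ∃ τ ∈ Γ, C0norm τ < d - c ∧ s < ((τ ⟨s, sU⟩ : ↥unitI) : ℝ) := by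
      rcases hne.lt_or_gt with hlt | hgt
      · refine ⟨γ⁻¹, Γ.inv_mem hγΓ, lt_of_le_of_lt (C0norm_inv_le γ) hγn, ?_⟩
        by_contra h
        push_neg at h
        have h' : γ⁻¹ ⟨s, sU⟩ ≤ ⟨s, sU⟩ := Subtype.coe_le_coe.mp h
        have := hmono.monotone h'
        rw [show γ (γ⁻¹ ⟨s, sU⟩) = ⟨s, sU⟩ from γ.apply_symm_apply _] at this
        exact absurd (lt_of_le_of_lt this hlt) (lt_irrefl _)
      · exact ⟨γ, hγΓ, hγn, hgt⟩
    -- continuity at s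
    have hct : ContinuousOn (toReal τ) unitI := ((hΓdiff τ hτΓ).2.1).continuousOn
    have hcw : ContinuousWithinAt (toReal τ) unitI s := hct s sU
    have hts : toReal τ s = ((τ ⟨s, sU⟩ : ↥unitI) : ℝ) := dif_pos sU
    have hev : {x : ℝ | s < toReal τ x} ∈ nhdsWithin s unitI := by
      apply hcw
      rw [hts]
      exact Ioi_mem_nhds hτs
    obtain ⟨δ, hδ, hball⟩ := Metric.mem_nhdsWithin_iff.mp hev
    obtain ⟨a, haS, halt⟩ := exists_lt_of_lt_csSup hSne (show s - δ < s by linarith)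
    have has : a ≤ s := le_csSup hSbdd haS
    obtain ⟨hac, γ', hγ'Γ, hγ'a⟩ := haS
    have haU : a ∈ unitI := hγ'a ▸ (γ' p).2
    have hdista : a ∈ Metric.ball s δ := by
      rw [Metric.mem_ball, Real.dist_eq, abs_sub_lt_iff]
      constructor <;> linarith
    have hgt : s < toReal τ a := hball ⟨hdista, haU⟩
    have hτa : toReal τ a = ((τ (γ' p) : ↥unitI) : ℝ) := by
      rw [show toReal τ a = ((τ ⟨a, haU⟩ : ↥unitI) : ℝ) from dif_pos haU]
      congr 1
      exact congrArg τ (Subtype.ext hγ'a.symm)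
    refine ⟨τ * γ', Γ.mul_mem hτΓ hγ'Γ, ?_, ?_⟩
    · rw [Equiv.Perm.mul_apply]
      by_contra h
      push_neg at h
      have hmem : ((τ (γ' p) : ↥unitI) : ℝ) ∈ S :=
        ⟨h, τ * γ', Γ.mul_mem hτΓ hγ'Γ, by rw [Equiv.Perm.mul_apply]⟩
      have := le_csSup hSbdd hmem
      rw [← hτa] at this
      linarith
    · rw [Equiv.Perm.mul_apply]
      have hnorm := le_C0norm τ ⟨a, haU⟩
      have heq : ((τ ⟨a, haU⟩ : ↥unitI) : ℝ) = ((τ (γ' p) : ↥unitI) : ℝ) := by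
        congr 1
        exact congrArg τ (Subtype.ext hγ'a.symm)
      rw [heq] at hnorm
      have habs : ((τ (γ' p) : ↥unitI) : ℝ) - a ≤ |((τ (γ' p) : ↥unitI) : ℝ) - a| :=
        le_abs_self _
      linarith
  · rcases lt_or_ge (p : ℝ) d with h2 | h2
    · exact ⟨1, Γ.one_mem, by simpa using h1, by simpa using h2⟩
    · -- d ≤ p : inf case
      set S : Set ℝ := {x | d ≤ x ∧ ∃ γ ∈ Γ, ((γ p : ↥unitI) : ℝ) = x} with hS
      have hpS : (p : ℝ) ∈ S := ⟨h2, 1, Γ.one_mem, rfl⟩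
      have hSne : S.Nonempty := ⟨p, hpS⟩
      have hSbdd : BddBelow S := ⟨d, fun x hx => hx.1⟩
      set s : ℝ := sInf S with hsdef
      have hps : s ≤ (p : ℝ) := csInf_le hSbdd hpS
      have hsd : d ≤ s := le_csInf hSne fun x hx => hx.1
      have hs0 : 0 < s := lt_of_lt_of_le (lt_of_le_of_lt hc hcd) hsd
      have hs1 : s < 1 := lt_of_le_of_lt hps hp1
      have sU : s ∈ unitI := ⟨hs0.le, hs1.le⟩
      obtain ⟨γ, hγΓ, hγn, hγs⟩ := hΓloc ⟨s, sU⟩ hs0 hs1 (d - c) (by linarith)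
      have hmono : StrictMono fun x : ↥unitI => (γ x : ℝ) := (hΓdiff γ hγΓ).1
      have hne : ((γ ⟨s, sU⟩ : ↥unitI) : ℝ) ≠ s := fun h => hγs (Subtype.ext h)
      obtain ⟨τ, hτΓ, hτn, hτs⟩ :
          ∃ τ ∈ Γ, C0norm τ < d - c ∧ ((τ ⟨s, sU⟩ : ↥unitI) : ℝ) < s := by
        rcases hne.lt_or_gt with hlt | hgt
        · exact ⟨γ, hγΓ, hγn, hlt⟩
        · refine ⟨γ⁻¹, Γ.inv_mem hγΓ, lt_of_le_of_lt (C0norm_inv_le γ) hγn, ?_⟩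
          by_contra h
          push_neg at h
          have h' : (⟨s, sU⟩ : ↥unitI) ≤ γ⁻¹ ⟨s, sU⟩ := Subtype.coe_le_coe.mp h
          have := hmono.monotone h'
          rw [show γ (γ⁻¹ ⟨s, sU⟩) = ⟨s, sU⟩ from γ.apply_symm_apply _] at this
          exact absurd (lt_of_lt_of_le hgt this) (lt_irrefl _)
      have hct : ContinuousOn (toReal τ) unitI := ((hΓdiff τ hτΓ).2.1).continuousOn
      have hcw : ContinuousWithinAt (toReal τ) unitI s := hct s sU
      have hts : toReal τ s = ((τ ⟨s, sU⟩ : ↥unitI) : ℝ) := dif_pos sU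
      have hev : toReal τ ⁻¹' Set.Iio s ∈ nhdsWithin s unitI :=
        hcw (by rw [hts]; exact Iio_mem_nhds hτs)
      obtain ⟨δ, hδ, hball⟩ := Metric.mem_nhdsWithin_iff.mp hev
      obtain ⟨a, haS, halt⟩ := exists_lt_of_csInf_lt hSne (show s < s + δ by linarith)
      have has : s ≤ a := csInf_le hSbdd haS
      obtain ⟨hda, γ', hγ'Γ, hγ'a⟩ := haS
      have haU : a ∈ unitI := hγ'a ▸ (γ' p).2
      have hdista : a ∈ Metric.ball s δ := by
        rw [Metric.mem_ball, Real.dist_eq, abs_sub_lt_iff]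
        constructor <;> linarith
      have hlt' : toReal τ a < s := hball ⟨hdista, haU⟩
      have hτa : toReal τ a = ((τ (γ' p) : ↥unitI) : ℝ) := by
        rw [show toReal τ a = ((τ ⟨a, haU⟩ : ↥unitI) : ℝ) from dif_pos haU]
        congr 1
        exact congrArg τ (Subtype.ext hγ'a.symm)
      refine ⟨τ * γ', Γ.mul_mem hτΓ hγ'Γ, ?_, ?_⟩
      · rw [Equiv.Perm.mul_apply]
        have hnorm := le_C0norm τ ⟨a, haU⟩
        have heq : ((τ ⟨a, haU⟩ : ↥unitI) : ℝ) = ((τ (γ' p) : ↥unitI) : ℝ) := by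
          congr 1
          exact congrArg τ (Subtype.ext hγ'a.symm)
        rw [heq] at hnorm
        have habs : a - ((τ (γ' p) : ↥unitI) : ℝ) ≤ |((τ (γ' p) : ↥unitI) : ℝ) - a| := by
          rw [abs_sub_comm]; exact le_abs_self _
        linarith
      · rw [Equiv.Perm.mul_apply]
        by_contra h
        push_neg at h
        have hmem : ((τ (γ' p) : ↥unitI) : ℝ) ∈ S :=
          ⟨h, τ * γ', Γ.mul_mem hτΓ hγ'Γ, by rw [Equiv.Perm.mul_apply]⟩
        have := csInf_le hSbdd hmem
        rw [← hτa] at this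
        linarith

end
end

section
/- Let Γ be an irreducible subgroup of Homeo₊(I) such that every non-identity element of Γ has finitely many fixed points in (0,1), and let N be a non-trivial Abelian normal subgroup of Γ. Then every non-identity element of N acts freely on (0,1): Fix(g) = ∅ for all g ∈ N \ {1}. -/
noncomputable section

lemma oph_strictMono {σ : IntervalMap} (h : IsOPH σ) : StrictMono σ := by
  intro x y hxy
  have := h hxy
  exact Subtype.coe_lt_coe.mp this

lemma oph_pos {σ : IntervalMap} (h : IsOPH σ) {x : ↥unitI}
    (hx : 0 < (x : ℝ)) : 0 < (σ x : ℝ) := by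
  set z : ↥unitI := ⟨0, by constructor <;> norm_num⟩ with hzdef
  have hfix : σ z = z := by
    set w := σ.symm z with hw
    have hσw : σ w = z := σ.apply_symm_apply z
    rcases eq_or_lt_of_le (show z ≤ w from Subtype.coe_le_coe.mp w.2.1) with heq | hlt
    · rw [← heq] at hσw; rw [hσw]
    · exfalso
      have h1 : (σ z : ℝ) < (σ w : ℝ) := h hlt
      rw [hσw] at h1
      exact absurd h1 (not_lt.mpr (σ z).2.1)
  have hzx : z < x := Subtype.coe_lt_coe.mp hx
  have h2 : (σ z : ℝ) < (σ x : ℝ) := h hzx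
  rw [hfix] at h2
  exact h2

lemma oph_lt_one {σ : IntervalMap} (h : IsOPH σ) {x : ↥unitI}
    (hx : (x : ℝ) < 1) : (σ x : ℝ) < 1 := by
  set z : ↥unitI := ⟨1, by constructor <;> norm_num⟩ with hzdef
  have hfix : σ z = z := by
    set w := σ.symm z with hw
    have hσw : σ w = z := σ.apply_symm_apply z
    rcases eq_or_lt_of_le (show w ≤ z from Subtype.coe_le_coe.mp w.2.2) with heq | hlt
    · rw [heq] at hσw; rw [hσw]
    · exfalso
      have h1 : (σ w : ℝ) < (σ z : ℝ) := h hlt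
      rw [hσw] at h1
      exact absurd h1 (not_lt.mpr (σ z).2.2)
  have hzx : x < z := Subtype.coe_lt_coe.mp hx
  have h2 : (σ x : ℝ) < (σ z : ℝ) := h hzx
  rw [hfix] at h2
  exact h2

lemma fix_of_mapsTo {σ : IntervalMap} (hm : StrictMono σ) {S : Set ↥unitI}
    (hS : S.Finite) (hmap : Set.MapsTo σ S S) : ∀ x ∈ S, σ x = x := by
  intro x hx
  by_contra hne
  have hmem : ∀ n : ℕ, (σ ^ n) x ∈ S := by
    intro n
    induction n with
    | zero => simpa using hx
    | succ k ih =>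
      have : (σ ^ (k + 1)) x = σ ((σ ^ k) x) := by
        rw [pow_succ']; rfl
      rw [this]; exact hmap ih
  rcases lt_or_gt_of_ne hne with hlt | hgt
  · -- σ x < x, iterates strictly decreasing
    have hstep : ∀ n : ℕ, (σ ^ (n + 1)) x < (σ ^ n) x := by
      intro n
      induction n with
      | zero => simpa using hlt
      | succ k ih =>
        have e1 : (σ ^ (k + 2)) x = σ ((σ ^ (k + 1)) x) := by rw [pow_succ']; rfl
        have e2 : (σ ^ (k + 1)) x = σ ((σ ^ k) x) := by rw [pow_succ']; rfl
        rw [e1]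
        calc σ ((σ ^ (k + 1)) x) < σ ((σ ^ k) x) := hm ih
          _ = (σ ^ (k + 1)) x := e2.symm
    have hanti : StrictAnti fun n : ℕ => (σ ^ n) x :=
      strictAnti_nat_of_succ_lt hstep
    exact Set.infinite_of_injective_forall_mem hanti.injective hmem hS
  · have hstep : ∀ n : ℕ, (σ ^ n) x < (σ ^ (n + 1)) x := by
      intro n
      induction n with
      | zero => simpa using hgt
      | succ k ih =>
        have e1 : (σ ^ (k + 2)) x = σ ((σ ^ (k + 1)) x) := by rw [pow_succ']; rfl
        have e2 : (σ ^ (k + 1)) x = σ ((σ ^ k) x) := by rw [pow_succ']; rfl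
        rw [e1, e2]
        exact hm (e2 ▸ ih)
    have hmono : StrictMono fun n : ℕ => (σ ^ n) x :=
      strictMono_nat_of_lt_succ hstep
    exact Set.infinite_of_injective_forall_mem hmono.injective hmem hS

theorem stmt15 (Γ : Subgroup IntervalMap) (hΓhomeo : HomeoSubgroup Γ)
    (hΓfix : FinFix Γ) (hΓirr : Irred Γ)
    (N : Subgroup IntervalMap) (hNsub : N ≤ Γ) (hNnt : N ≠ ⊥)
    (hNab : ∀ a ∈ N, ∀ b ∈ N, a * b = b * a)
    (hNnorm : ∀ g ∈ Γ, ∀ n ∈ N, g * n * g⁻¹ ∈ N) :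
    ∀ g ∈ N, g ≠ 1 → FixPts g = ∅ := by
  intro g hg hgne
  by_contra hne
  obtain ⟨p, hpfix, hp0, hp1⟩ := Set.nonempty_iff_ne_empty.mpr hne
  have hgΓ : g ∈ Γ := hNsub hg
  have hSfin : (FixPts g).Finite := hΓfix g hgΓ hgne
  -- every element of N fixes FixPts g pointwise
  have claimA : ∀ h ∈ N, ∀ x ∈ FixPts g, h x = x := by
    intro h hh
    have hhΓ : h ∈ Γ := hNsub hh
    have hoph : IsOPH h := hΓhomeo h hhΓ
    refine fix_of_mapsTo (oph_strictMono hoph) hSfin ?_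
    rintro x ⟨hxg, hx0, hx1⟩
    refine ⟨?_, oph_pos hoph hx0, oph_lt_one hoph hx1⟩
    have hcomm : g * h = h * g := hNab g hg h hh
    calc g (h x) = (g * h) x := rfl
      _ = (h * g) x := by rw [hcomm]
      _ = h (g x) := rfl
      _ = h x := by rw [hxg]
  -- every element of Γ fixes FixPts g pointwise
  have claimB : ∀ γ ∈ Γ, ∀ x ∈ FixPts g, γ x = x := by
    intro γ hγ
    have hoph : IsOPH γ := hΓhomeo γ hγ
    have hnN : γ⁻¹ * g * γ ∈ N := by
      have := hNnorm γ⁻¹ (inv_mem hγ) g hg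
      simpa [inv_inv] using this
    refine fix_of_mapsTo (oph_strictMono hoph) hSfin ?_
    rintro x hx
    obtain ⟨hxg, hx0, hx1⟩ := hx
    refine ⟨?_, oph_pos hoph hx0, oph_lt_one hoph hx1⟩
    have hnx : (γ⁻¹ * g * γ) x = x := claimA _ hnN x ⟨hxg, hx0, hx1⟩
    have : γ ((γ⁻¹ * g * γ) x) = γ x := by rw [hnx]
    simpa only [Equiv.Perm.mul_apply, Equiv.Perm.inv_def, Equiv.apply_symm_apply] using this
  exact hΓirr ⟨p, hp0, hp1, fun γ hγ => claimB γ hγ p ⟨hpfix, hp0, hp1⟩⟩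

end
end
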